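/- The number 9210347984 = 2⁴·83·89·149·523 is a primitive weird number with five distinct prime factors, i.e., it is weird, none of its proper divisors is weird, and it has exactly five distinct prime factors. -/

import Mathlib

/-- `sigma' n` is the sum of all divisors of `n` (including `n`). -/
def sigma' (n : ℕ) : ℕ := ∑ d ∈ n.divisors, d

/-- A natural number is abundant if `σ(n) > 2n`. -/
def Abundant (n : ℕ) : Prop := 2 * n < sigma' n

/-- A natural number is deficient if `σ(n) < 2n`. -/
def Deficient (n : ℕ) : Prop := sigma' n < 2 * n

/-- A natural number is semiperfect if it is the sum of some set of
its distinct proper divisors. -/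
def Semiperfect (n : ℕ) : Prop := ∃ S ⊆ n.properDivisors, ∑ d ∈ S, d = n

/-- A natural number is weird if it is abundant but not semiperfect. -/
def Weird (n : ℕ) : Prop := Abundant n ∧ ¬ Semiperfect n

set_option maxRecDepth 8000 in
lemma sig16 : sigma' 16 = 31 := by decide

set_option maxRecDepth 8000 in
lemma sig8 : sigma' 8 = 15 := by decide

set_option maxRecDepth 8000 in
lemma sig4 : sigma' 4 = 7 := by decide

set_option maxRecDepth 8000 in
lemma sig2 : sigma' 2 = 3 := by decide

lemma sig_prime {p : ℕ} (hp : p.Prime) : sigma' p = p + 1 := by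
  rw [sigma', hp.divisors, Finset.sum_insert (by simp [hp.one_lt.ne]), Finset.sum_singleton]
  omega

lemma sig_mul {m n : ℕ} (h : Nat.Coprime m n) : sigma' (m*n) = sigma' m * sigma' n :=
  h.sum_divisors_mul

lemma sig_m3 : sigma' 575646749 = 594216000 := by
  have h : (575646749:ℕ) = 83 * (89 * (149 * 523)) := by norm_num
  rw [h, sig_mul (by decide), sig_mul (by decide), sig_mul (by decide),
    sig_prime (p := 83) (by norm_num), sig_prime (p := 89) (by norm_num),
    sig_prime (p := 149) (by norm_num), sig_prime (p := 523) (by norm_num)]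

lemma sig_n : sigma' 9210347984 = 18420696000 := by
  have h : (9210347984:ℕ) = 16 * 575646749 := by norm_num
  rw [h, sig_mul (by decide), sig16, sig_m3]

lemma small_div_n {e : ℕ} (h : e ∣ 9210347984) (h2 : e ≤ 32) :
    e = 1 ∨ e = 2 ∨ e = 4 ∨ e = 8 ∨ e = 16 := by
  interval_cases e <;> omega

lemma key {d c : ℕ} (hc : 2 ≤ c) (hd : 0 < d) :
    sigma' d * c + 1 ≤ sigma' (d * c) := by
  classical
  have hcpos : 0 < c := by omega
  set I := d.divisors.image (· * c) with hI
  have hinj : Set.InjOn (· * c) d.divisors := fun a _ b _ h =>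
    Nat.eq_of_mul_eq_mul_right hcpos h
  have hIsum : ∑ e ∈ I, e = sigma' d * c := by
    rw [hI, Finset.sum_image hinj, ← Finset.sum_mul]; rfl
  have h1ni : 1 ∉ I := by
    simp only [hI, Finset.mem_image]
    rintro ⟨e, he, hec⟩
    have : e ≥ 1 := (Nat.pos_of_mem_divisors he)
    nlinarith
  have hsub : insert 1 I ⊆ (d * c).divisors := by
    intro x hx
    rw [Finset.mem_insert] at hx
    rcases hx with rfl | hx
    · exact Nat.one_mem_divisors.2 (by positivity)
    · rw [hI, Finset.mem_image] at hx
      obtain ⟨e, he, rfl⟩ := hx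
      exact Nat.mem_divisors.2 ⟨mul_dvd_mul_right (Nat.mem_divisors.1 he).1 c, by positivity⟩
  calc sigma' d * c + 1 = ∑ e ∈ insert 1 I, e := by
        rw [Finset.sum_insert h1ni, hIsum]; omega
    _ ≤ sigma' (d * c) := Finset.sum_le_sum_of_subset hsub

/-- `9210347984 = 2⁴·83·89·149·523` is a primitive weird number with five
distinct prime factors: it is weird, none of its proper divisors is weird, and it
has exactly five distinct prime factors. -/
theorem primitive_weird_9210347984 :
    (9210347984 : ℕ) = 2 ^ 4 * 83 * 89 * 149 * 523 ∧
    Weird 9210347984 ∧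
    (∀ d ∈ (9210347984 : ℕ).properDivisors, ¬ Weird d) ∧
    (9210347984 : ℕ).primeFactors.card = 5 := by
  refine ⟨by norm_num, ⟨?_, ?_⟩, ?_, ?_⟩
  · -- Abundant
    rw [Abundant, sig_n]; norm_num
  · -- not Semiperfect
    rintro ⟨S, hS, hsum⟩
    have hP : ∑ d ∈ (9210347984 : ℕ).properDivisors, d = 9210348016 := by
      have := Nat.sum_divisors_eq_sum_properDivisors_add_self (n := 9210347984)
      rw [show (∑ d ∈ (9210347984:ℕ).divisors, d) = 18420696000 from sig_n] at this
      omega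
    have hsd : ∑ d ∈ (9210347984:ℕ).properDivisors \ S, d + ∑ d ∈ S, d
        = ∑ d ∈ (9210347984 : ℕ).properDivisors, d := Finset.sum_sdiff hS
    have hT : ∑ d ∈ (9210347984:ℕ).properDivisors \ S, d = 32 := by omega
    have hsub : (9210347984:ℕ).properDivisors \ S ⊆ ({1,2,4,8,16} : Finset ℕ) := by
      intro t ht
      have htP := Finset.mem_sdiff.1 ht |>.1
      have htdvd : t ∣ 9210347984 := (Nat.mem_properDivisors.1 htP).1
      have htle : t ≤ 32 := by
        have h2 : t ≤ ∑ d ∈ (9210347984:ℕ).properDivisors \ S, d :=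
          Finset.single_le_sum (fun i _ => Nat.zero_le i) ht
        omega
      have := small_div_n htdvd htle
      simp only [Finset.mem_insert, Finset.mem_singleton]
      omega
    have hle : ∑ d ∈ (9210347984:ℕ).properDivisors \ S, d ≤ ∑ d ∈ ({1,2,4,8,16} : Finset ℕ), d :=
      Finset.sum_le_sum_of_subset hsub
    have h31 : ∑ d ∈ ({1,2,4,8,16} : Finset ℕ), d = 31 := by norm_num
    omega
  · -- no proper divisor is weird
    intro d hd hw
    obtain ⟨hdvd, hlt⟩ := Nat.mem_properDivisors.1 hd
    have hdpos : 0 < d := Nat.pos_of_dvd_of_pos hdvd (by norm_num)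
    obtain ⟨c, hc⟩ := hdvd
    have hc2 : 2 ≤ c := by nlinarith
    have hk := key hc2 hdpos
    rw [← hc, sig_n] at hk
    have habun : 2 * d < sigma' d := hw.1
    -- if abundant then sigma' d ≥ 2d+1, so (2d+1)*c + 1 ≤ 18420696000, with d*c = n
    have hcle : c ≤ 32 := by
      have h2 : 2 * (d * c) + c ≤ sigma' d * c := by nlinarith
      rw [← hc] at h2
      omega
    have hcdvd : c ∣ 9210347984 := ⟨d, by rw [hc, Nat.mul_comm]⟩
    rcases small_div_n hcdvd hcle with rfl | rfl | rfl | rfl | rfl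
    · omega
    · have hd' : d = 4605173992 := by omega
      rw [hd', show (4605173992:ℕ) = 8 * 575646749 by norm_num,
        sig_mul (by decide), sig8, sig_m3] at habun
      omega
    · have hd' : d = 2302586996 := by omega
      rw [hd', show (2302586996:ℕ) = 4 * 575646749 by norm_num,
        sig_mul (by decide), sig4, sig_m3] at habun
      omega
    · have hd' : d = 1151293498 := by omega
      rw [hd', show (1151293498:ℕ) = 2 * 575646749 by norm_num,
        sig_mul (by decide), sig2, sig_m3] at habun
      omega
    · have hd' : d = 575646749 := by omega
      rw [hd', sig_m3] at habun
      omega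
  · -- five prime factors
    rw [show (9210347984:ℕ) = 2^4 * (83 * (89 * (149 * 523))) by norm_num,
      Nat.primeFactors_mul (by norm_num) (by norm_num),
      Nat.primeFactors_mul (by norm_num) (by norm_num),
      Nat.primeFactors_mul (by norm_num) (by norm_num),
      Nat.primeFactors_mul (by norm_num) (by norm_num),
      Nat.primeFactors_pow _ (by norm_num),
      Nat.Prime.primeFactors (by norm_num), Nat.Prime.primeFactors (by norm_num),
      Nat.Prime.primeFactors (by norm_num), Nat.Prime.primeFactors (by norm_num),
      Nat.Prime.primeFactors (by norm_num)]
    decide
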